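/- In a free group, if an element u is not a proper power, then u generates its own centralizer: the centralizer of u equals the cyclic subgroup generated by u. -/

import Mathlib

private lemma swap_not_commute :
    Equiv.swap (0 : Fin 3) 1 * Equiv.swap 1 2 ≠ Equiv.swap 1 2 * Equiv.swap 0 1 := by decide

private lemma freeGroup_of_not_commute {X : Type*} {a b : X} (hab : a ≠ b) :
    ¬ Commute (FreeGroup.of a) (FreeGroup.of b) := by
  classical
  intro h
  set f : X → Equiv.Perm (Fin 3) :=
    Function.update (fun _ => Equiv.swap 1 2) a (Equiv.swap 0 1) with hf
  have := h.map (FreeGroup.lift f)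
  rw [FreeGroup.lift_apply_of, FreeGroup.lift_apply_of, hf, Function.update_self,
    Function.update_of_ne (Ne.symm hab)] at this
  exact swap_not_commute this.eq

private lemma isCyclic_of_isFreeGroup_comm {G : Type*} [Group G] [IsFreeGroup G]
    (hcomm : ∀ x y : G, Commute x y) : IsCyclic G := by
  classical
  set X := IsFreeGroup.Generators G
  have hsub : Subsingleton X := by
    constructor
    intro a b
    by_contra hab
    have hofa : (IsFreeGroup.mulEquiv G).symm (IsFreeGroup.of a) = FreeGroup.of a := by
      show (IsFreeGroup.mulEquiv G).symm ((IsFreeGroup.mulEquiv G) (FreeGroup.of a)) = _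
      exact MulEquiv.symm_apply_apply _ _
    have hofb : (IsFreeGroup.mulEquiv G).symm (IsFreeGroup.of b) = FreeGroup.of b := by
      show (IsFreeGroup.mulEquiv G).symm ((IsFreeGroup.mulEquiv G) (FreeGroup.of b)) = _
      exact MulEquiv.symm_apply_apply _ _
    have hc := (hcomm (IsFreeGroup.of a) (IsFreeGroup.of b)).map
      (IsFreeGroup.mulEquiv G).symm.toMonoidHom
    rw [MulEquiv.coe_toMonoidHom, hofa, hofb] at hc
    exact freeGroup_of_not_commute hab hc
  rcases isEmpty_or_nonempty X with hX | hX
  · refine ⟨⟨1, fun x => ?_⟩⟩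
    have hx : ∀ w : FreeGroup X, (IsFreeGroup.mulEquiv G) w = 1 := by
      intro w
      induction w with
      | C1 => simp
      | of x => exact (hX.false x).elim
      | inv_of x _ => exact (hX.false x).elim
      | mul x y hx hy => rw [map_mul, hx, hy, one_mul]
    have hx1 : x = 1 := by
      have := hx ((IsFreeGroup.mulEquiv G).symm x)
      rwa [MulEquiv.apply_symm_apply] at this
    exact ⟨0, by simp [hx1]⟩
  · obtain ⟨a⟩ := hX
    refine ⟨⟨IsFreeGroup.of a, fun x => ?_⟩⟩
    have hx : ∀ w : FreeGroup X,
        (IsFreeGroup.mulEquiv G) w ∈ Subgroup.zpowers (IsFreeGroup.of a) := by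
      intro w
      induction w with
      | C1 => simpa using Subgroup.one_mem _
      | of x =>
        have : x = a := Subsingleton.elim x a
        subst this
        exact Subgroup.mem_zpowers _
      | inv_of x h => simpa [map_inv] using Subgroup.inv_mem _ h
      | mul x y hx hy => rw [map_mul]; exact Subgroup.mul_mem _ hx hy
    have := hx ((IsFreeGroup.mulEquiv G).symm x)
    rwa [MulEquiv.apply_symm_apply] at this

/-- `u` is not a proper power. -/
def FreeGroup.Primitive {α : Type*} (u : FreeGroup α) : Prop :=
  ∀ (v : FreeGroup α) (k : ℕ), 0 < k → u = v ^ k → k = 1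

/-- In a free group, an element that is not a proper power generates its own centralizer. -/
theorem freeGroup_centralizer_eq_zpowers {α : Type*} (u : FreeGroup α) (hu : u ≠ 1)
    (hprim : FreeGroup.Primitive u) :
    Subgroup.centralizer {u} = Subgroup.zpowers u := by
  ext g
  constructor
  · intro hg
    rw [Subgroup.mem_centralizer_iff] at hg
    have hug : u * g = g * u := hg u rfl
    set H : Subgroup (FreeGroup α) := Subgroup.closure {g, u} with hH
    have hgH : g ∈ H := Subgroup.subset_closure (by simp)
    have huH : u ∈ H := Subgroup.subset_closure (by simp)
    have hcomm : ∀ x ∈ H, ∀ y ∈ H, Commute x y := by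
      intro x hx y hy
      induction hx, hy using Subgroup.closure_induction₂ with
      | mem x y hx hy =>
        rcases hx with rfl | rfl <;> rcases hy with rfl | rfl
        · exact Commute.refl _
        · exact hug.symm
        · exact hug
        · exact Commute.refl _
      | one_left x hx => exact Commute.one_left x
      | one_right x hx => exact Commute.one_right x
      | mul_left x y z _ _ _ h1 h2 => exact h1.mul_left h2
      | mul_right y z x _ _ _ h1 h2 => exact h1.mul_right h2
      | inv_left x y _ _ h => exact h.inv_left
      | inv_right x y _ _ h => exact h.inv_right
    have hsubcomm : ∀ x y : H, Commute x y := by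
      intro x y
      have := hcomm x x.2 y y.2
      exact Subtype.ext (by simpa [Commute, SemiconjBy] using this)
    have hcyc : IsCyclic H := isCyclic_of_isFreeGroup_comm hsubcomm
    obtain ⟨⟨w, hwH⟩, hgen⟩ := IsCyclic.exists_generator (α := H)
    obtain ⟨n, hn⟩ := hgen ⟨u, huH⟩
    obtain ⟨m, hm⟩ := hgen ⟨g, hgH⟩
    have hun : w ^ n = u := by
      have := congrArg (Subtype.val) hn
      simpa using this
    have hgm : w ^ m = g := by
      have := congrArg (Subtype.val) hm
      simpa using this
    have hn0 : n ≠ 0 := by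
      rintro rfl
      apply hu
      rw [← hun, zpow_zero]
    rcases lt_trichotomy n 0 with hneg | hzero | hpos
    · have hkey : u = (w⁻¹) ^ (-n).toNat := by
        rw [← zpow_natCast, Int.toNat_of_nonneg (by omega), inv_zpow, ← zpow_neg, neg_neg, hun]
      have := hprim w⁻¹ (-n).toNat (by omega) hkey
      have hn1 : n = -1 := by omega
      subst hn1
      have hwu : w = u⁻¹ := by rw [← hun]; group
      refine ⟨-m, ?_⟩
      rw [← hgm, hwu]
      group
    · exact absurd hzero hn0
    · have hkey : u = w ^ n.toNat := by
        rw [← zpow_natCast, Int.toNat_of_nonneg (by omega), hun]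
      have := hprim w n.toNat (by omega) hkey
      have hn1 : n = 1 := by omega
      subst hn1
      have hwu : w = u := by rw [← hun]; group
      exact ⟨m, by rw [← hgm, hwu]⟩
  · rintro ⟨n, rfl⟩
    rw [Subgroup.mem_centralizer_iff]
    rintro x rfl
    show x * x ^ n = x ^ n * x
    exact ((Commute.refl x).zpow_right n).eq
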